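/- Let $g_f, g_d, P_{BS}, P_{user}, N_0 > 0$ and $\beta \geq 0$. Define $a_1 = g_d P_{BS}^2 P_{user}$, $b_1 = N_0 g_f P_{user}(P_{BS} - P_{user})$, $c_1 = N_0^2 g_f P_{user} + N_0 g_f^2 P_{BS} P_{user}$. Suppose $g_f = g_d$. Then the full-duplex condition $\log\big(1 + \frac{g_f P_{BS}}{N_0 + \beta P_{user}}\big) + \log\big(1 + \frac{g_f P_{user}}{N_0 + \beta P_{BS}}\big) > \log\big(1 + \frac{g_d P_{BS}}{N_0}\big)$ holds if and only if $a_1 \beta^2 + b_1 \beta - c_1 < 0$. -/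
import Mathlib


theorem stmt_8 (gf gd PBS Puser N0 β : ℝ)
    (hgf : 0 < gf) (hgd : 0 < gd) (hPBS : 0 < PBS) (hPuser : 0 < Puser)
    (hN0 : 0 < N0) (hβ : 0 ≤ β) (hfd : gf = gd) :
    (Real.log (1 + gf * PBS / (N0 + β * Puser)) +
       Real.log (1 + gf * Puser / (N0 + β * PBS)) >
     Real.log (1 + gd * PBS / N0)) ↔
    (gd * PBS ^ 2 * Puser) * β ^ 2 +
      (N0 * gf * Puser * (PBS - Puser)) * β -
      (N0 ^ 2 * gf * Puser + N0 * gf ^ 2 * PBS * Puser) < 0 := by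
  subst hfd
  have hu : 0 < N0 + β * Puser := by positivity
  have hv : 0 < N0 + β * PBS := by positivity
  have hA : 0 < 1 + gf * PBS / (N0 + β * Puser) := by positivity
  have hB : 0 < 1 + gf * Puser / (N0 + β * PBS) := by positivity
  have hC : 0 < 1 + gf * PBS / N0 := by positivity
  rw [← Real.log_mul (ne_of_gt hA) (ne_of_gt hB), gt_iff_lt,
    Real.log_lt_log_iff hC (mul_pos hA hB)]
  rw [show 1 + gf * PBS / N0 = (N0 + gf * PBS) / N0 by field_simp,
    show 1 + gf * PBS / (N0 + β * Puser) = ((N0 + β * Puser) + gf * PBS) / (N0 + β * Puser) by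
      field_simp,
    show 1 + gf * Puser / (N0 + β * PBS) = ((N0 + β * PBS) + gf * Puser) / (N0 + β * PBS) by
      field_simp,
    div_mul_div_comm, div_lt_div_iff₀ hN0 (mul_pos hu hv)]
  constructor <;> intro h <;> nlinarith [h]
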